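/- For the test risk function R(θ, n, m) := (r·n²/(m·(n+1+r+σ²)²) + 1)·(r+σ²) − 2·r·n·cos²(θ)/(n+1+r+σ²) + (m+1)·r·n²·cos²(θ)/(m·(n+1+r+σ²)²), the limit as n → ∞ followed by m → ∞ equals r·sin²(θ) + σ². -/

import Mathlib

open Filter

theorem stmt13 (r : ℕ) (hr : 1 ≤ r) (σ : ℝ) (hσ : 0 ≤ σ)
    (θ : ℝ) (hθ : θ ∈ Set.Icc 0 (Real.pi / 2))
    (R : ℝ → ℝ → ℝ)
    (hR : ∀ n m, R n m =
      ((r : ℝ) * n ^ 2 / (m * (n + 1 + r + σ ^ 2) ^ 2) + 1) * (r + σ ^ 2)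
        - 2 * r * n * Real.cos θ ^ 2 / (n + 1 + r + σ ^ 2)
        + (m + 1) * r * n ^ 2 * Real.cos θ ^ 2 / (m * (n + 1 + r + σ ^ 2) ^ 2)) :
    ∃ g : ℝ → ℝ,
      (∀ m > 0, Tendsto (fun n => R n m) atTop (nhds (g m))) ∧
        Tendsto g atTop (nhds ((r : ℝ) * Real.sin θ ^ 2 + σ ^ 2)) := by
  set c : ℝ := 1 + (r : ℝ) + σ ^ 2 with hc
  have hcpos : 0 < c := by positivity
  set C : ℝ := Real.cos θ ^ 2 with hC
  refine ⟨fun m => ((r : ℝ) / m * 1 + 1) * ((r : ℝ) + σ ^ 2) - 2 * r * C * 1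
      + (m + 1) * r * C / m * 1, ?_, ?_⟩
  · intro m hm
    have ht : Tendsto (fun n : ℝ => n / (n + c)) atTop (nhds 1) := by
      have h1 : Tendsto (fun n : ℝ => n + c) atTop atTop :=
        tendsto_atTop_add_const_right _ _ tendsto_id
      have h2 : Tendsto (fun n : ℝ => c / (n + c)) atTop (nhds 0) :=
        h1.const_div_atTop c
      have h3 : Tendsto (fun n : ℝ => 1 - c / (n + c)) atTop (nhds 1) := by
        simpa using tendsto_const_nhds.sub h2
      refine h3.congr' ?_
      filter_upwards [eventually_ge_atTop (1 : ℝ)] with n hn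
      have hne : n + c ≠ 0 := by positivity
      field_simp
      ring
    have hmain : Tendsto
        (fun n : ℝ => ((r : ℝ) / m * (n / (n + c)) ^ 2 + 1) * ((r : ℝ) + σ ^ 2)
          - 2 * r * C * (n / (n + c))
          + (m + 1) * r * C / m * (n / (n + c)) ^ 2) atTop
        (nhds (((r : ℝ) / m * 1 + 1) * ((r : ℝ) + σ ^ 2) - 2 * r * C * 1
          + (m + 1) * r * C / m * 1)) := by
      have h1pow : Tendsto (fun n : ℝ => (n / (n + c)) ^ 2) atTop (nhds 1) := by
        simpa using ht.pow 2
      exact (((tendsto_const_nhds.mul h1pow).add tendsto_const_nhds).mul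
        tendsto_const_nhds).sub (tendsto_const_nhds.mul ht) |>.add
        (tendsto_const_nhds.mul h1pow) |>.congr (by
          intro n; push_cast; ring_nf) |>.congr (fun n => rfl)
    refine hmain.congr' ?_
    filter_upwards [eventually_ge_atTop (1 : ℝ)] with n hn
    have hne : n + c ≠ 0 := by positivity
    have hmne : m ≠ 0 := ne_of_gt hm
    rw [hR]
    have hrw : n + 1 + (r : ℝ) + σ ^ 2 = n + c := by rw [hc]; ring
    rw [hrw]
    field_simp
  · have h1 : Tendsto (fun m : ℝ => (r : ℝ) / m) atTop (nhds 0) :=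
      tendsto_id.const_div_atTop _
    have h2 : Tendsto (fun m : ℝ => (m + 1) * r * C / m) atTop (nhds ((r : ℝ) * C)) := by
      have h3 : Tendsto (fun m : ℝ => (r : ℝ) * C + r * C / m) atTop
          (nhds ((r : ℝ) * C + 0)) :=
        tendsto_const_nhds.add (tendsto_id.const_div_atTop _)
      rw [add_zero] at h3
      refine h3.congr' ?_
      filter_upwards [eventually_gt_atTop (0 : ℝ)] with m hm
      have hmne : m ≠ 0 := ne_of_gt hm
      field_simp
    have hmain : Tendsto (fun m : ℝ => ((r : ℝ) / m * 1 + 1) * ((r : ℝ) + σ ^ 2)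
        - 2 * r * C * 1 + (m + 1) * r * C / m * 1) atTop
        (nhds ((0 * 1 + 1) * ((r : ℝ) + σ ^ 2) - 2 * r * C * 1 + (r : ℝ) * C * 1)) :=
      (((h1.mul tendsto_const_nhds).add tendsto_const_nhds).mul
        tendsto_const_nhds).sub tendsto_const_nhds |>.add (h2.mul tendsto_const_nhds)
    convert hmain using 2
    rw [hC, Real.sin_sq]
    ring
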